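/- (Division theorem) Let k be a field, ≺ a local monomial order on ℕ^n, and g_1,…,g_r nonzero elements of k[[x]]. Let Δ_1,…,Δ_r, Δ̄ be the partition of ℕ^n associated to e_j = exp(g_j), j = 1,…,r. Then for every f ∈ k[[x]] there exists a unique tuple (q_1,…,q_r,R) ∈ k[[x]]^{r+1} such that: (i) f = q_1 g_1 + ⋯ + q_r g_r + R; (ii) for each j, q_j = 0 or ND(q_j) + e_j ⊆ Δ_j; (iii) R = 0 or ND(R) ⊆ Δ̄. -/

import Mathlib

open MvPowerSeries

noncomputable section

/-- A monomial order: a linear (strict total) order on an additive monoid of exponents,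
compatible with addition. -/
structure IsMonomialOrder {M : Type*} [AddCommMonoid M] (lt : M → M → Prop) : Prop where
  total : ∀ a b, lt a b ∨ a = b ∨ lt b a
  irrefl : ∀ a, ¬ lt a a
  trans : ∀ a b c, lt a b → lt b c → lt a c
  add_right : ∀ a b c, lt a b → lt (a + c) (b + c)

/-- A local monomial order: a monomial order for which `α ≼ 0` for every `α`. -/
structure IsLocalMonomialOrder {M : Type*} [AddCommMonoid M] (lt : M → M → Prop)
    extends IsMonomialOrder lt : Prop where
  le_zero : ∀ a, a = 0 ∨ lt a 0

/-- A monomial well order: a monomial order for which `0` is the least element. -/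
structure IsWellMonomialOrder {M : Type*} [AddCommMonoid M] (lt : M → M → Prop)
    extends IsMonomialOrder lt : Prop where
  zero_le : ∀ a, a = 0 ∨ lt 0 a

/-- The Newton diagram of a multivariate power series. -/
def ND {n : ℕ} {k : Type*} [Semiring k] (f : MvPowerSeries (Fin n) k) : Set (Fin n →₀ ℕ) :=
  {α | MvPowerSeries.coeff (R := k) α f ≠ 0}

/-- `e` is the `lt`-greatest element of the Newton diagram of `f`, i.e. `e = exp(f)`. -/
def IsExp {n : ℕ} {k : Type*} [Semiring k] (lt : (Fin n →₀ ℕ) → (Fin n →₀ ℕ) → Prop)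
    (f : MvPowerSeries (Fin n) k) (e : Fin n →₀ ℕ) : Prop :=
  e ∈ ND f ∧ ∀ β ∈ ND f, β ≠ e → lt β e

/-- `e + ℕ^n`. -/
def upSet {n : ℕ} (e : Fin n →₀ ℕ) : Set (Fin n →₀ ℕ) := {α | ∃ γ, α = e + γ}

/-- The set of leading exponents of the nonzero elements of an ideal of power series. -/
def ExpSet {n : ℕ} {k : Type*} [Semiring k] (lt : (Fin n →₀ ℕ) → (Fin n →₀ ℕ) → Prop)
    (J : Ideal (MvPowerSeries (Fin n) k)) : Set (Fin n →₀ ℕ) :=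
  {e | ∃ f ∈ J, IsExp lt f e}

/-- The region `Δ_j` of the partition of `ℕ^n` associated with `e_1, …, e_r`. -/
def Delta {n r : ℕ} (e : Fin r → (Fin n →₀ ℕ)) (j : Fin r) : Set (Fin n →₀ ℕ) :=
  upSet (e j) \ ⋃ (i : Fin r) (_ : i < j), upSet (e i)

/-- The region `Δ̄` of the partition of `ℕ^n` associated with `e_1, …, e_r`. -/
def DeltaBar {n r : ℕ} (e : Fin r → (Fin n →₀ ℕ)) : Set (Fin n →₀ ℕ) :=
  (⋃ (i : Fin r), upSet (e i))ᶜ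

/-- Condition (ii) of the division theorem: each quotient `q_j` is `0` or satisfies
`ND(q_j) + e_j ⊆ Δ_j`. -/
def QuotCond {n r : ℕ} {k : Type*} [Semiring k] (e : Fin r → (Fin n →₀ ℕ))
    (q : Fin r → MvPowerSeries (Fin n) k) : Prop :=
  ∀ j, q j = 0 ∨ ∀ α ∈ ND (q j), α + e j ∈ Delta e j

/-- Condition (iii) of the division theorem: the remainder `R` is `0` or satisfies
`ND(R) ⊆ Δ̄`. -/
def RemCond {n r : ℕ} {k : Type*} [Semiring k] (e : Fin r → (Fin n →₀ ℕ))
    (R : MvPowerSeries (Fin n) k) : Prop :=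
  R = 0 ∨ ND R ⊆ DeltaBar e

namespace DivisionAux

open Finset

theorem mem_upSet {n : ℕ} {e α : Fin n →₀ ℕ} : α ∈ upSet e ↔ e ≤ α := by
  constructor
  · rintro ⟨γ, rfl⟩; exact le_self_add
  · intro h; exact ⟨α - e, (add_tsub_cancel_of_le h).symm⟩

theorem lt_wf {n : ℕ} {lt : (Fin n →₀ ℕ) → (Fin n →₀ ℕ) → Prop}
    (hlt : IsLocalMonomialOrder lt) : WellFounded (fun a b => lt b a) := by
  haveI : IsIrrefl (Fin n →₀ ℕ) (fun a b => lt b a) := ⟨fun a h => hlt.irrefl a h⟩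
  haveI : IsTrans (Fin n →₀ ℕ) (fun a b => lt b a) :=
    ⟨fun a b c h1 h2 => hlt.trans c b a h2 h1⟩
  haveI : IsStrictOrder (Fin n →₀ ℕ) (fun a b => lt b a) := ⟨⟩
  rw [RelEmbedding.wellFounded_iff_isEmpty]
  constructor
  intro φ
  obtain ⟨a, b, hab, hle⟩ :=
    wellQuasiOrdered_le (α := Fin n →₀ ℕ) ⇑φ
  have h1 : lt (φ a) (φ b) := φ.map_rel_iff.mpr hab
  obtain ⟨δ, hδ⟩ := le_iff_exists_add.mp hle
  rcases hlt.le_zero δ with h0 | h0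
  · rw [h0, add_zero] at hδ
    rw [← hδ] at h1
    exact hlt.irrefl _ h1
  · have h2 : lt (δ + φ a) (0 + φ a) := hlt.add_right _ _ _ h0
    rw [zero_add, add_comm] at h2
    rw [← hδ] at h2
    exact hlt.irrefl _ (hlt.trans _ _ _ h1 h2)

variable {n r : ℕ} {k : Type} [Field k]

theorem delta_subset (e : Fin r → (Fin n →₀ ℕ)) (j : Fin r) : Delta e j ⊆ upSet (e j) :=
  Set.diff_subset

theorem delta_disjoint {e : Fin r → (Fin n →₀ ℕ)} {i j : Fin r} (hij : i ≠ j)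
    {α : Fin n →₀ ℕ} (hi : α ∈ Delta e i) (hj : α ∈ Delta e j) : False := by
  rcases lt_or_gt_of_ne hij with h | h
  · exact hj.2 (Set.mem_iUnion₂.mpr ⟨i, h, hi.1⟩)
  · exact hi.2 (Set.mem_iUnion₂.mpr ⟨j, h, hj.1⟩)

theorem delta_not_deltaBar {e : Fin r → (Fin n →₀ ℕ)} {j : Fin r} {α : Fin n →₀ ℕ}
    (h : α ∈ Delta e j) : α ∉ DeltaBar e := fun hb => hb (Set.mem_iUnion.mpr ⟨j, h.1⟩)

theorem exists_delta {e : Fin r → (Fin n →₀ ℕ)} {α : Fin n →₀ ℕ} (h : α ∉ DeltaBar e) :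
    ∃ j, α ∈ Delta e j := by
  classical
  have h' : α ∈ ⋃ i, upSet (e i) := not_not.mp h
  obtain ⟨i0, hi0⟩ := Set.mem_iUnion.mp h'
  set S : Finset (Fin r) := Finset.univ.filter fun i => α ∈ upSet (e i) with hS
  have hSne : S.Nonempty := ⟨i0, by simp [hS, hi0]⟩
  refine ⟨S.min' hSne, ?_, ?_⟩
  · have := S.min'_mem hSne
    simpa [hS] using this
  · intro hmem
    obtain ⟨i, hilt, hiup⟩ := Set.mem_iUnion₂.mp hmem
    exact absurd (S.min'_le i (by simp [hS, hiup])) (not_le.mpr hilt)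

open scoped Classical

variable (g : Fin r → MvPowerSeries (Fin n) k) (e : Fin r → (Fin n →₀ ℕ))

/-- The "tail" operator. -/
noncomputable def TT (v : (Fin n →₀ ℕ) → k) (α : Fin n →₀ ℕ) : k :=
  ∑ p ∈ Finset.HasAntidiagonal.antidiagonal α, ∑ j : Fin r,
    if p.1 + e j ∈ Delta e j ∧ p.2 ≠ e j then
      v (p.1 + e j) * MvPowerSeries.coeff (R := k) p.2 (g j) else 0

/-- The "leading coefficient" at a position. -/
noncomputable def CC (α : Fin n →₀ ℕ) : k :=
  (∑ j : Fin r, if α ∈ Delta e j then MvPowerSeries.coeff (R := k) (e j) (g j) else 0) +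
    (if α ∈ DeltaBar e then 1 else 0)

noncomputable def DDD (α : Fin n →₀ ℕ) : k :=
  (∑ j : Fin r, if α ∈ Delta e j then (MvPowerSeries.coeff (R := k) (e j) (g j))⁻¹ else 0) +
    (if α ∈ DeltaBar e then 1 else 0)

variable {lt : (Fin n →₀ ℕ) → (Fin n →₀ ℕ) → Prop}

/-- The coefficient function, by well-founded recursion. -/
noncomputable def UU (hlt : IsLocalMonomialOrder lt) (f : MvPowerSeries (Fin n) k) :
    (Fin n →₀ ℕ) → k :=
  (lt_wf hlt).fix fun α rec =>
    DDD g e α * (MvPowerSeries.coeff (R := k) α f - ∑ p ∈ Finset.HasAntidiagonal.antidiagonal α, ∑ j : Fin r,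
      if h : lt α (p.1 + e j) ∧ p.1 + e j ∈ Delta e j then
        rec (p.1 + e j) h.1 * MvPowerSeries.coeff (R := k) p.2 (g j) else 0)

theorem UU_eq (hlt : IsLocalMonomialOrder lt) (he : ∀ j, IsExp lt (g j) (e j))
    (f : MvPowerSeries (Fin n) k) (α : Fin n →₀ ℕ) :
    UU g e hlt f α =
      DDD g e α * (MvPowerSeries.coeff (R := k) α f - TT g e (UU g e hlt f) α) := by
  have h0 : UU g e hlt f α = DDD g e α *
      (MvPowerSeries.coeff (R := k) α f - ∑ p ∈ Finset.HasAntidiagonal.antidiagonal α, ∑ j : Fin r,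
        if h : lt α (p.1 + e j) ∧ p.1 + e j ∈ Delta e j then
          UU g e hlt f (p.1 + e j) * MvPowerSeries.coeff (R := k) p.2 (g j) else 0) :=
    WellFounded.fix_eq (lt_wf hlt) _ α
  rw [h0]
  congr 2
  refine Finset.sum_congr rfl fun p hp => Finset.sum_congr rfl fun j _ => ?_
  by_cases hg0 : MvPowerSeries.coeff (R := k) p.2 (g j) = 0
  · simp [hg0]
  by_cases hpe : p.2 = e j
  · have hpα : p.1 + e j = α := by rw [← hpe]; exact Finset.HasAntidiagonal.mem_antidiagonal.mp hp
    rw [hpα]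
    simp [hpe, hlt.irrefl α]
  · have hltj : lt p.2 (e j) := (he j).2 p.2 hg0 hpe
    have hlab : lt α (p.1 + e j) := by
      have h2 := hlt.add_right _ _ p.1 hltj
      rw [add_comm p.2 p.1, add_comm (e j) p.1] at h2
      rwa [Finset.HasAntidiagonal.mem_antidiagonal.mp hp] at h2
    simp [hlab, hpe]

theorem CC_ne (hc : ∀ j, MvPowerSeries.coeff (R := k) (e j) (g j) ≠ 0) (α : Fin n →₀ ℕ) :
    CC g e α ≠ 0 := by
  by_cases hb : α ∈ DeltaBar e
  · have hnd : ∀ j, α ∉ Delta e j := fun j hj => delta_not_deltaBar hj hb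
    simp [CC, hb, hnd]
  · obtain ⟨j, hj⟩ := exists_delta hb
    have hsum : (∑ i : Fin r, if α ∈ Delta e i then MvPowerSeries.coeff (R := k) (e i) (g i) else 0)
        = MvPowerSeries.coeff (R := k) (e j) (g j) := by
      rw [Finset.sum_eq_single j]
      · simp [hj]
      · intro i _ hne
        exact if_neg fun h => delta_disjoint hne h hj
      · intro h; exact absurd (Finset.mem_univ j) h
    simp [CC, hb, hsum, hc j]

theorem DDD_mul_CC (hc : ∀ j, MvPowerSeries.coeff (R := k) (e j) (g j) ≠ 0) (α : Fin n →₀ ℕ) :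
    DDD g e α * CC g e α = 1 := by
  by_cases hb : α ∈ DeltaBar e
  · have hnd : ∀ j, α ∉ Delta e j := fun j hj => delta_not_deltaBar hj hb
    simp [CC, DDD, hb, hnd]
  · obtain ⟨j, hj⟩ := exists_delta hb
    have hsum : (∑ i : Fin r, if α ∈ Delta e i then MvPowerSeries.coeff (R := k) (e i) (g i) else 0)
        = MvPowerSeries.coeff (R := k) (e j) (g j) := by
      rw [Finset.sum_eq_single j]
      · simp [hj]
      · intro i _ hne
        exact if_neg fun h => delta_disjoint hne h hj
      · intro h; exact absurd (Finset.mem_univ j) h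
    have hsum' : (∑ i : Fin r, if α ∈ Delta e i then (MvPowerSeries.coeff (R := k) (e i) (g i))⁻¹ else 0)
        = (MvPowerSeries.coeff (R := k) (e j) (g j))⁻¹ := by
      rw [Finset.sum_eq_single j]
      · simp [hj]
      · intro i _ hne
        exact if_neg fun h => delta_disjoint hne h hj
      · intro h; exact absurd (Finset.mem_univ j) h
    simp [CC, DDD, hb, hsum, hsum', inv_mul_cancel₀ (hc j)]

theorem coeff_eq (v : (Fin n →₀ ℕ) → k) (α : Fin n →₀ ℕ) :
    MvPowerSeries.coeff (R := k) α
      ((∑ j, (show MvPowerSeries (Fin n) k from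
          fun β => if β + e j ∈ Delta e j then v (β + e j) else 0) * g j) +
        (show MvPowerSeries (Fin n) k from fun β => if β ∈ DeltaBar e then v β else 0))
      = CC g e α * v α + TT g e v α := by
  rw [map_add, map_sum]
  have hR : MvPowerSeries.coeff (R := k) α
      (show MvPowerSeries (Fin n) k from fun β => if β ∈ DeltaBar e then v β else 0)
      = if α ∈ DeltaBar e then v α else 0 := rfl
  rw [hR]
  have hj : ∀ j : Fin r, MvPowerSeries.coeff (R := k) α
      ((show MvPowerSeries (Fin n) k from
          fun β => if β + e j ∈ Delta e j then v (β + e j) else 0) * g j)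
      = (if α ∈ Delta e j then MvPowerSeries.coeff (R := k) (e j) (g j) * v α else 0)
        + ∑ p ∈ Finset.HasAntidiagonal.antidiagonal α,
            (if p.1 + e j ∈ Delta e j ∧ p.2 ≠ e j then
              v (p.1 + e j) * MvPowerSeries.coeff (R := k) p.2 (g j) else 0) := by
    intro j
    rw [MvPowerSeries.coeff_mul]
    have h1 : ∀ p ∈ Finset.HasAntidiagonal.antidiagonal α,
        (MvPowerSeries.coeff (R := k) p.1 (show MvPowerSeries (Fin n) k from
          fun β => if β + e j ∈ Delta e j then v (β + e j) else 0))
          * MvPowerSeries.coeff (R := k) p.2 (g j)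
        = (if p.2 = e j then
            (if p.1 + e j ∈ Delta e j then v (p.1 + e j) else 0)
              * MvPowerSeries.coeff (R := k) p.2 (g j) else 0)
          + (if p.1 + e j ∈ Delta e j ∧ p.2 ≠ e j then
              v (p.1 + e j) * MvPowerSeries.coeff (R := k) p.2 (g j) else 0) := by
      intro p _
      have hco : (MvPowerSeries.coeff (R := k) p.1 (show MvPowerSeries (Fin n) k from
          fun β => if β + e j ∈ Delta e j then v (β + e j) else 0))
          = if p.1 + e j ∈ Delta e j then v (p.1 + e j) else 0 := rfl
      rw [hco]
      by_cases hpe : p.2 = e j <;> by_cases hD : p.1 + e j ∈ Delta e j <;>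
        simp [hpe, hD]
    rw [Finset.sum_congr rfl h1, Finset.sum_add_distrib]
    congr 1
    by_cases hle : e j ≤ α
    · rw [Finset.sum_eq_single ((α - e j, e j) : (Fin n →₀ ℕ) × (Fin n →₀ ℕ))]
      · have hpe : (α - e j) + e j = α := tsub_add_cancel_of_le hle
        simp only [if_pos rfl, hpe]
        by_cases hD : α ∈ Delta e j <;> simp [hD, mul_comm]
      · rintro ⟨p1, p2⟩ hp hne
        simp only [Finset.HasAntidiagonal.mem_antidiagonal] at hp
        by_cases hpe : p2 = e j
        · exfalso
          apply hne
          subst hpe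
          have h2 : p1 = α - e j := eq_tsub_of_add_eq hp
          rw [h2]
        · simp [hpe]
      · intro hnm
        exfalso
        exact hnm (Finset.HasAntidiagonal.mem_antidiagonal.mpr (tsub_add_cancel_of_le hle))
    · have hD : α ∉ Delta e j := fun h => hle (mem_upSet.mp (delta_subset e j h))
      rw [if_neg hD, Finset.sum_eq_zero]
      rintro ⟨p1, p2⟩ hp
      simp only [Finset.HasAntidiagonal.mem_antidiagonal] at hp
      by_cases hpe : p2 = e j
      · exfalso
        apply hle
        subst hpe
        rw [← hp]
        exact le_add_self
      · simp [hpe]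
  rw [Finset.sum_congr rfl fun j _ => hj j, Finset.sum_add_distrib]
  rw [TT, Finset.sum_comm]
  have hlead : (∑ j : Fin r, if α ∈ Delta e j then MvPowerSeries.coeff (R := k) (e j) (g j) * v α else 0)
      + (if α ∈ DeltaBar e then v α else 0) = CC g e α * v α := by
    rw [CC, add_mul, Finset.sum_mul]
    congr 1
    · refine Finset.sum_congr rfl fun j _ => ?_
      by_cases hD : α ∈ Delta e j <;> simp [hD]
    · by_cases hb : α ∈ DeltaBar e <;> simp [hb]
  rw [add_right_comm, hlead]

/-- The quotients built from a coefficient function. -/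
noncomputable def QQ (v : (Fin n →₀ ℕ) → k) (j : Fin r) : MvPowerSeries (Fin n) k :=
  show MvPowerSeries (Fin n) k from fun β => if β + e j ∈ Delta e j then v (β + e j) else 0

/-- The remainder built from a coefficient function. -/
noncomputable def RR (v : (Fin n →₀ ℕ) → k) : MvPowerSeries (Fin n) k :=
  show MvPowerSeries (Fin n) k from fun β => if β ∈ DeltaBar e then v β else 0

theorem coeff_QQ (v : (Fin n →₀ ℕ) → k) (j : Fin r) (β : Fin n →₀ ℕ) :
    MvPowerSeries.coeff (R := k) β (QQ e v j) = if β + e j ∈ Delta e j then v (β + e j) else 0 := rfl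

theorem coeff_RR (v : (Fin n →₀ ℕ) → k) (β : Fin n →₀ ℕ) :
    MvPowerSeries.coeff (R := k) β (RR e v) = if β ∈ DeltaBar e then v β else 0 := rfl

theorem coeff_eq2 (v : (Fin n →₀ ℕ) → k) (α : Fin n →₀ ℕ) :
    MvPowerSeries.coeff (R := k) α ((∑ j, QQ e v j * g j) + RR e v)
      = CC g e α * v α + TT g e v α :=
  coeff_eq g e v α

theorem Eu_lemma (hlt : IsLocalMonomialOrder lt)
    (hc : ∀ j, MvPowerSeries.coeff (R := k) (e j) (g j) ≠ 0)
    (he : ∀ j, IsExp lt (g j) (e j)) (f : MvPowerSeries (Fin n) k) (α : Fin n →₀ ℕ) :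
    MvPowerSeries.coeff (R := k) α f
      = CC g e α * UU g e hlt f α + TT g e (UU g e hlt f) α := by
  have h := UU_eq g e hlt he f α
  have h2 : CC g e α * UU g e hlt f α
      = MvPowerSeries.coeff (R := k) α f - TT g e (UU g e hlt f) α := by
    rw [h, ← mul_assoc, mul_comm (CC g e α), DDD_mul_CC g e hc, one_mul]
  rw [h2]; ring

theorem exists_sol (hlt : IsLocalMonomialOrder lt)
    (hc : ∀ j, MvPowerSeries.coeff (R := k) (e j) (g j) ≠ 0)
    (he : ∀ j, IsExp lt (g j) (e j)) (f : MvPowerSeries (Fin n) k) :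
    f = (∑ j, QQ e (UU g e hlt f) j * g j) + RR e (UU g e hlt f)
      ∧ QuotCond e (QQ e (UU g e hlt f)) ∧ RemCond e (RR e (UU g e hlt f)) := by
  refine ⟨?_, ?_, ?_⟩
  · apply MvPowerSeries.ext
    intro α
    rw [coeff_eq2 g e (UU g e hlt f) α]
    exact Eu_lemma g e hlt hc he f α
  · intro j
    right
    intro β hβ
    by_contra hD
    exact hβ (by rw [coeff_QQ, if_neg hD])
  · right
    intro α hα
    by_contra hb
    exact hα (by rw [coeff_RR, if_neg hb])

theorem unique_sol (hlt : IsLocalMonomialOrder lt)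
    (hc : ∀ j, MvPowerSeries.coeff (R := k) (e j) (g j) ≠ 0)
    (he : ∀ j, IsExp lt (g j) (e j)) (f : MvPowerSeries (Fin n) k)
    (q : Fin r → MvPowerSeries (Fin n) k) (R : MvPowerSeries (Fin n) k)
    (hsum : f = (∑ j, q j * g j) + R) (hqc : QuotCond e q) (hrc : RemCond e R) :
    q = QQ e (UU g e hlt f) ∧ R = RR e (UU g e hlt f) := by
  classical
  set v : (Fin n →₀ ℕ) → k := fun α =>
    (∑ j : Fin r, if α ∈ Delta e j then MvPowerSeries.coeff (R := k) (α - e j) (q j) else 0) +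
      (if α ∈ DeltaBar e then MvPowerSeries.coeff (R := k) α R else 0) with hv
  have hvq : ∀ (j : Fin r) (β : Fin n →₀ ℕ), β + e j ∈ Delta e j →
      v (β + e j) = MvPowerSeries.coeff (R := k) β (q j) := by
    intro j β hD
    rw [hv]
    have hnb : β + e j ∉ DeltaBar e := delta_not_deltaBar hD
    simp only []
    rw [if_neg hnb, add_zero, Finset.sum_eq_single j]
    · rw [if_pos hD, add_tsub_cancel_right]
    · intro i _ hne
      exact if_neg fun h => delta_disjoint hne h hD
    · intro h; exact absurd (Finset.mem_univ j) h
  have hq0 : ∀ (j : Fin r) (β : Fin n →₀ ℕ), β + e j ∉ Delta e j →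
      MvPowerSeries.coeff (R := k) β (q j) = 0 := by
    intro j β hD
    rcases hqc j with h0 | hs
    · rw [h0]; exact map_zero _
    · by_contra hne
      exact hD (hs β hne)
  have hqQ : ∀ j, q j = QQ e v j := by
    intro j
    apply MvPowerSeries.ext
    intro β
    rw [coeff_QQ]
    by_cases hD : β + e j ∈ Delta e j
    · rw [if_pos hD, hvq j β hD]
    · rw [if_neg hD, hq0 j β hD]
  have hvR : ∀ α, α ∈ DeltaBar e → v α = MvPowerSeries.coeff (R := k) α R := by
    intro α hb
    rw [hv]
    simp only []
    rw [if_pos hb, Finset.sum_eq_zero, zero_add]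
    intro i _
    exact if_neg fun h => delta_not_deltaBar h hb
  have hR0 : ∀ α, α ∉ DeltaBar e → MvPowerSeries.coeff (R := k) α R = 0 := by
    intro α hb
    rcases hrc with h0 | hs
    · rw [h0]; exact map_zero _
    · by_contra hne
      exact hb (hs hne)
  have hRR : R = RR e v := by
    apply MvPowerSeries.ext
    intro α
    rw [coeff_RR]
    by_cases hb : α ∈ DeltaBar e
    · rw [if_pos hb, hvR α hb]
    · rw [if_neg hb, hR0 α hb]
  have hsum' : f = (∑ j, QQ e v j * g j) + RR e v := by
    rw [hsum, ← hRR]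
    congr 1
    exact Finset.sum_congr rfl fun j _ => by rw [← hqQ j]
  have Ev : ∀ α, MvPowerSeries.coeff (R := k) α f = CC g e α * v α + TT g e v α := by
    intro α
    rw [hsum']
    exact coeff_eq2 g e v α
  have key : ∀ α, v α = UU g e hlt f α := by
    intro α
    refine (lt_wf hlt).induction (C := fun α => v α = UU g e hlt f α) α ?_
    intro β ih
    have hTT : TT g e v β = TT g e (UU g e hlt f) β := by
      refine Finset.sum_congr rfl fun p hp => Finset.sum_congr rfl fun j _ => ?_
      by_cases hg0 : MvPowerSeries.coeff (R := k) p.2 (g j) = 0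
      · simp [hg0]
      by_cases hcond : p.1 + e j ∈ Delta e j ∧ p.2 ≠ e j
      · rw [if_pos hcond, if_pos hcond]
        have hltj : lt p.2 (e j) := (he j).2 p.2 hg0 hcond.2
        have hlab : lt β (p.1 + e j) := by
          have h2 := hlt.add_right _ _ p.1 hltj
          rw [add_comm p.2 p.1, add_comm (e j) p.1] at h2
          rwa [Finset.HasAntidiagonal.mem_antidiagonal.mp hp] at h2
        rw [ih (p.1 + e j) hlab]
      · rw [if_neg hcond, if_neg hcond]
    have h1 := (Ev β).symm.trans (Eu_lemma g e hlt hc he f β)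
    rw [hTT] at h1
    exact mul_left_cancel₀ (CC_ne g e hc β) (add_right_cancel h1)
  have hQQ : ∀ j, QQ e v j = QQ e (UU g e hlt f) j := by
    intro j
    apply MvPowerSeries.ext
    intro β
    rw [coeff_QQ, coeff_QQ]
    by_cases hD : β + e j ∈ Delta e j
    · rw [if_pos hD, if_pos hD, key]
    · rw [if_neg hD, if_neg hD]
  have hRR2 : RR e v = RR e (UU g e hlt f) := by
    apply MvPowerSeries.ext
    intro α
    rw [coeff_RR, coeff_RR]
    by_cases hb : α ∈ DeltaBar e
    · rw [if_pos hb, if_pos hb, key]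
    · rw [if_neg hb, if_neg hb]
  exact ⟨funext fun j => (hqQ j).trans (hQQ j), hRR.trans hRR2⟩

end DivisionAux

/-- Division theorem: for nonzero `g_1, …, g_r` in `k[[x]]` and the partition
`Δ_1, …, Δ_r, Δ̄` of `ℕ^n` associated with the `exp(g_j)`, every `f ∈ k[[x]]` has a unique
writing `f = ∑ q_j g_j + R` with `q_j = 0` or `ND(q_j) + exp(g_j) ⊆ Δ_j`, and `R = 0` or
`ND(R) ⊆ Δ̄`. -/


theorem division_theorem {n : ℕ} (hn : 1 ≤ n) (k : Type) [Field k]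
    (lt : (Fin n →₀ ℕ) → (Fin n →₀ ℕ) → Prop) (hlt : IsLocalMonomialOrder lt)
    {r : ℕ} (g : Fin r → MvPowerSeries (Fin n) k) (hg : ∀ j, g j ≠ 0)
    (e : Fin r → (Fin n →₀ ℕ)) (he : ∀ j, IsExp lt (g j) (e j))
    (f : MvPowerSeries (Fin n) k) :
    ∃! qR : (Fin r → MvPowerSeries (Fin n) k) × MvPowerSeries (Fin n) k,
      f = (∑ j, qR.1 j * g j) + qR.2 ∧ QuotCond e qR.1 ∧ RemCond e qR.2 := by
  classical
  have hc : ∀ j, MvPowerSeries.coeff (R := k) (e j) (g j) ≠ 0 := fun j => (he j).1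
  refine ⟨⟨DivisionAux.QQ e (DivisionAux.UU g e hlt f),
      DivisionAux.RR e (DivisionAux.UU g e hlt f)⟩,
    DivisionAux.exists_sol g e hlt hc he f, ?_⟩
  rintro ⟨q, R⟩ ⟨hsum, hqc, hrc⟩
  obtain ⟨h1, h2⟩ := DivisionAux.unique_sol g e hlt hc he f q R hsum hqc hrc
  rw [Prod.mk.injEq]
  exact ⟨h1, h2⟩
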